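/- Let p ≥ 2 be real, b > 0, D > 0. With σ(h,1) = (D/(p-1))(p(p^{hb}+1)/(p^b + p^{hb}) - p^{-b}) and σ(max) = D(p^{b+2} - 1)/(p^b(p^2 - 1)), the limit of σ(h,1) as h → 1⁻ equals D(p^{b+1} + p - 2)/(2p^b(p-1)), and σ(max) − lim_{h→1⁻} σ(h,1) = D(p^b − 1)/(2 p^{b−1}(p+1)), which is strictly positive. -/

import Mathlib

/-- The jump of the first-component diffusion coefficient at `h = 1`:
`σ(h,1) → D(p^{b+1}+p-2)/(2p^b(p-1))` as `h → 1⁻`, and the gap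
`σ(max) - lim_{h→1⁻} σ(h,1) = D(p^b-1)/(2p^{b-1}(p+1)) > 0`. -/
theorem stmt_10 (p b D : ℝ) (hp : 2 ≤ p) (hb : 0 < b) (hD : 0 < D)
    (σ₁ : ℝ → ℝ) (σmax L : ℝ)
    (hσ₁ : ∀ h, σ₁ h = D / (p - 1) * (p * (p ^ (h * b) + 1) / (p ^ b + p ^ (h * b)) - p ^ (-b)))
    (hσm : σmax = D * (p ^ (b + 2) - 1) / (p ^ b * (p ^ (2:ℝ) - 1)))
    (hL : L = D * (p ^ (b + 1) + p - 2) / (2 * p ^ b * (p - 1))) :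
    Filter.Tendsto σ₁ (nhdsWithin 1 (Set.Iio 1)) (nhds L) ∧
      σmax - L = D * (p ^ b - 1) / (2 * p ^ (b - 1) * (p + 1)) ∧
      0 < D * (p ^ b - 1) / (2 * p ^ (b - 1) * (p + 1)) := by
  have hp0 : (0:ℝ) < p := lt_of_lt_of_le two_pos hp
  have hp1 : (1:ℝ) < p := lt_of_lt_of_le one_lt_two hp
  have hx : (0:ℝ) < p ^ b := Real.rpow_pos_of_pos hp0 b
  have hx1 : (1:ℝ) < p ^ b := Real.one_lt_rpow_iff_of_pos hp0 |>.2 (Or.inl ⟨hp1, hb⟩)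
  have hpb1 : p ^ (b + 1) = p ^ b * p := by
    rw [Real.rpow_add hp0, Real.rpow_one]
  have hpb2 : p ^ (b + 2) = p ^ b * p ^ (2:ℝ) := Real.rpow_add hp0 b 2
  have hp2 : p ^ (2:ℝ) = p * p := by
    rw [show (2:ℝ) = ((2:ℕ):ℝ) by norm_num, Real.rpow_natCast]; ring
  have hpbm1 : p ^ (b - 1) = p ^ b / p := by
    rw [Real.rpow_sub hp0, Real.rpow_one]
  have hpnb : p ^ (-b) = (p ^ b)⁻¹ := Real.rpow_neg hp0.le b
  have hp1' : p - 1 ≠ 0 := by nlinarith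
  have hσ1 : σ₁ 1 = L := by
    rw [hσ₁ 1, hL, one_mul, hpb1, hpnb]
    field_simp
    ring
  refine ⟨?_, ?_, ?_⟩
  · have hc : ContinuousAt σ₁ 1 := by
      have heq : σ₁ = fun h => D / (p - 1) *
          (p * (p ^ (h * b) + 1) / (p ^ b + p ^ (h * b)) - p ^ (-b)) := funext hσ₁
      rw [heq]
      have hrp : ContinuousAt (fun h : ℝ => p ^ (h * b)) 1 :=
        (Real.continuousAt_const_rpow hp0.ne').comp
          (continuousAt_id.mul continuousAt_const)
      refine ContinuousAt.mul continuousAt_const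
        (ContinuousAt.sub (ContinuousAt.div ?_ ?_ ?_) continuousAt_const)
      · exact ContinuousAt.mul continuousAt_const (hrp.add continuousAt_const)
      · exact ContinuousAt.add continuousAt_const hrp
      · have : (0:ℝ) < p ^ b + p ^ (1 * b) := by
          rw [one_mul]; positivity
        exact this.ne'
    rw [← hσ1]
    exact hc.continuousWithinAt.tendsto
  · rw [hσm, hL, hpb2, hpb1, hpbm1, hp2]
    have h2 : p * p - 1 ≠ 0 := by nlinarith
    have h2' : p ^ 2 - 1 ≠ 0 := by nlinarith
    have h3 : p + 1 ≠ 0 := by nlinarith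
    field_simp
    ring
  · rw [hpbm1]
    have : 0 < p ^ b - 1 := by linarith
    positivity
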